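/- Let μ be a p×q interval matrix. Then Mrk(μ) equals the maximum of the natural numbers t such that there is a t×t submatrix ν of μ (given by t rows and t columns of μ) with either a totally nonconstant pg-diagonal of length t, or a totally nonconstant pg-diagonal of some length k with 0 ≤ k ≤ t−1 whose complementary matrix has det^c ≠ 0. -/

import Mathlib

open scoped Classical in
/-- `detc a b` : for the square interval matrix with lower bounds `a` and upper bounds `b`,
the sum over all permutations σ whose generalized diagonal consists only of constant
entries of sign(σ) times the product of the (constant) values; the empty sum is 0. -/
noncomputable def detc {s : ℕ} (a b : Matrix (Fin s) (Fin s) ℝ) : ℝ :=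
  ∑ σ : Equiv.Perm (Fin s),
    if ∀ i, a i (σ i) = b i (σ i) then
      ((Equiv.Perm.sign σ : ℤ) : ℝ) * ∏ i, a i (σ i)
    else 0

/-- The complementary matrix of the pg-diagonal given by the injections `I` (rows) and
`J` (columns): the submatrix on the complementary rows and columns, taken in
increasing order. -/
noncomputable def complMatrix {p k : ℕ} (a : Matrix (Fin p) (Fin p) ℝ)
    (I J : Fin k → Fin p) (hI : Function.Injective I) (hJ : Function.Injective J) :
    Matrix (Fin (p - k)) (Fin (p - k)) ℝ := fun x y =>
  a (((Finset.univ.image I)ᶜ.orderIsoOfFin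
        (by simp [Finset.card_compl, Finset.card_image_of_injective _ hI]) x : Fin p))
    (((Finset.univ.image J)ᶜ.orderIsoOfFin
        (by simp [Finset.card_compl, Finset.card_image_of_injective _ hJ]) y : Fin p))

/-- A t×t interval matrix (with bounds `a ≤ b`) is *good* if it has a totally nonconstant
pg-diagonal of length t, or a totally nonconstant pg-diagonal of some length
0 ≤ k ≤ t−1 whose complementary matrix has det^c ≠ 0. -/
def IsGoodSquare {t : ℕ} (a b : Matrix (Fin t) (Fin t) ℝ) : Prop :=
  (∃ σ : Equiv.Perm (Fin t), ∀ i, a i (σ i) ≠ b i (σ i)) ∨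
    (∃ (k : ℕ) (_ : k ≤ t - 1) (I J : Fin k → Fin t)
        (hI : Function.Injective I) (hJ : Function.Injective J),
      (∀ i, a (I i) (J i) ≠ b (I i) (J i)) ∧
        detc (complMatrix a I J hI hJ) (complMatrix b I J hI hJ) ≠ 0)

section MrkAux
open scoped Classical
open Matrix

variable {t : ℕ}

/-- Update a single entry of a matrix. -/
noncomputable def upd (A : Matrix (Fin t) (Fin t) ℝ) (i0 j0 : Fin t) (x : ℝ) :
    Matrix (Fin t) (Fin t) ℝ :=
  Matrix.of fun i j => if i = i0 ∧ j = j0 then x else A i j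

/-- Partial-diagonal signed sums. -/
noncomputable def Dsum (a b : Matrix (Fin t) (Fin t) ℝ) (g : Fin t → Fin t)
    (T : Finset (Fin t)) : ℝ :=
  ∑ π : Equiv.Perm (Fin t),
    if (∀ i ∈ T, π i = g i) ∧ (∀ i ∉ T, a i (π i) = b i (π i)) then
      ((Equiv.Perm.sign π : ℤ) : ℝ) * ∏ i ∈ Tᶜ, a i (π i)
    else 0

def GG (a b : Matrix (Fin t) (Fin t) ℝ) : Prop :=
  ∃ (g : Fin t → Fin t) (T : Finset (Fin t)),
    (∀ i ∈ T, a i (g i) ≠ b i (g i)) ∧ Dsum a b g T ≠ 0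

def HasNZ (a b : Matrix (Fin t) (Fin t) ℝ) : Prop :=
  ∃ A : Matrix (Fin t) (Fin t) ℝ,
    (∀ i j, A i j ∈ Set.Icc (a i j) (b i j)) ∧ A.det ≠ 0

lemma Dsum_congr (a b : Matrix (Fin t) (Fin t) ℝ) {g g' : Fin t → Fin t}
    {T : Finset (Fin t)} (h : ∀ i ∈ T, g i = g' i) : Dsum a b g T = Dsum a b g' T := by
  unfold Dsum
  refine Finset.sum_congr rfl fun π _ => ?_
  have : (∀ i ∈ T, π i = g i) ↔ (∀ i ∈ T, π i = g' i) :=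
    ⟨fun H i hi => (H i hi).trans (h i hi), fun H i hi => (H i hi).trans (h i hi).symm⟩
  simp only [this]

lemma upd_self {t : ℕ} (A : Matrix (Fin t) (Fin t) ℝ) (i0 j0 : Fin t) :
    upd A i0 j0 (A i0 j0) = A := by
  ext i j
  simp only [upd, Matrix.of_apply]
  split_ifs with h
  · rw [h.1, h.2]
  · rfl

lemma upd_apply_ne {t : ℕ} (A : Matrix (Fin t) (Fin t) ℝ) (i0 j0 : Fin t) (x : ℝ)
    {i j : Fin t} (h : ¬(i = i0 ∧ j = j0)) : upd A i0 j0 x i j = A i j := by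
  simp only [upd, Matrix.of_apply, if_neg h]

lemma upd_apply_eq {t : ℕ} (A : Matrix (Fin t) (Fin t) ℝ) (i0 j0 : Fin t) (x : ℝ) :
    upd A i0 j0 x i0 j0 = x := by
  simp [upd]

lemma det_entry_affine {t : ℕ} (A : Matrix (Fin t) (Fin t) ℝ) (i0 j0 : Fin t) :
    ∃ C D : ℝ, ∀ x, (upd A i0 j0 x).det = x * C + D := by
  classical
  refine ⟨∑ σ ∈ Finset.univ.filter (fun σ : Equiv.Perm (Fin t) => σ j0 = i0),
      ((Equiv.Perm.sign σ : ℤ) : ℝ) * ∏ i ∈ Finset.univ.erase j0, A (σ i) i,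
    ∑ σ ∈ Finset.univ.filter (fun σ : Equiv.Perm (Fin t) => ¬ σ j0 = i0),
      ((Equiv.Perm.sign σ : ℤ) : ℝ) * ∏ i, A (σ i) i, fun x => ?_⟩
  rw [Matrix.det_apply', Finset.mul_sum,
    ← Finset.sum_filter_add_sum_filter_not Finset.univ (fun σ : Equiv.Perm (Fin t) => σ j0 = i0)]
  congr 1
  · refine Finset.sum_congr rfl fun σ hσ => ?_
    rw [Finset.mem_filter] at hσ
    have hprod : ∏ i, upd A i0 j0 x (σ i) i
        = x * ∏ i ∈ Finset.univ.erase j0, A (σ i) i := by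
      rw [← Finset.mul_prod_erase Finset.univ _ (Finset.mem_univ j0)]
      congr 1
      · rw [hσ.2, upd_apply_eq]
      · refine Finset.prod_congr rfl fun i hi => ?_
        exact upd_apply_ne A i0 j0 x (fun h => (Finset.mem_erase.mp hi).1 h.2)
    rw [hprod]; ring
  · refine Finset.sum_congr rfl fun σ hσ => ?_
    rw [Finset.mem_filter] at hσ
    congr 1
    refine Finset.prod_congr rfl fun i _ => ?_
    refine upd_apply_ne A i0 j0 x (fun h => hσ.2 ?_)
    rw [← h.2] at hσ ⊢; exact h.1

lemma hasNZ_fix_mono {a b : Matrix (Fin t) (Fin t) ℝ} {i0 j0 : Fin t} {c : ℝ}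
    (hc : c ∈ Set.Icc (a i0 j0) (b i0 j0)) :
    HasNZ (upd a i0 j0 c) (upd b i0 j0 c) → HasNZ a b := by
  rintro ⟨A, hbox, hdet⟩
  refine ⟨A, fun i j => ?_, hdet⟩
  by_cases h : i = i0 ∧ j = j0
  · obtain ⟨rfl, rfl⟩ := h
    have := hbox i j
    rw [upd_apply_eq, upd_apply_eq] at this
    have : A i j = c := le_antisymm this.2 this.1
    rw [this]; exact hc
  · have := hbox i j
    rwa [upd_apply_ne a i0 j0 c h, upd_apply_ne b i0 j0 c h] at this

lemma hasNZ_split {a b : Matrix (Fin t) (Fin t) ℝ} (hle : ∀ i j, a i j ≤ b i j)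
    {i0 j0 : Fin t} (hne : a i0 j0 ≠ b i0 j0) :
    HasNZ a b ↔ HasNZ (upd a i0 j0 (a i0 j0)) (upd b i0 j0 (a i0 j0)) ∨
      HasNZ (upd a i0 j0 (b i0 j0)) (upd b i0 j0 (b i0 j0)) := by
  constructor
  · rintro ⟨A, hbox, hdet⟩
    have hboxc : ∀ c, c ∈ Set.Icc (a i0 j0) (b i0 j0) →
        (∀ i j, upd A i0 j0 c i j ∈ Set.Icc (upd a i0 j0 c i j) (upd b i0 j0 c i j)) := by
      intro c hc i j
      by_cases h : i = i0 ∧ j = j0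
      · obtain ⟨rfl, rfl⟩ := h
        simp only [upd_apply_eq]
        exact ⟨le_refl c, le_refl c⟩
      · rw [upd_apply_ne A i0 j0 c h, upd_apply_ne a i0 j0 c h, upd_apply_ne b i0 j0 c h]
        exact hbox i j
    by_cases h1 : (upd A i0 j0 (a i0 j0)).det ≠ 0
    · exact Or.inl ⟨_, hboxc _ ⟨le_refl _, hle i0 j0⟩, h1⟩
    by_cases h2 : (upd A i0 j0 (b i0 j0)).det ≠ 0
    · exact Or.inr ⟨_, hboxc _ ⟨hle i0 j0, le_refl _⟩, h2⟩
    push_neg at h1 h2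
    exfalso
    obtain ⟨C, D, hCD⟩ := det_entry_affine A i0 j0
    rw [hCD] at h1 h2
    have hC : C = 0 := by
      by_contra hC
      apply hne
      have := sub_eq_zero.mpr (h1.trans h2.symm)
      have h3 : (a i0 j0 - b i0 j0) * C = 0 := by ring_nf; ring_nf at this; linarith [this]
      rcases mul_eq_zero.mp h3 with h | h
      · linarith [sub_eq_zero.mp h]
      · exact absurd h hC
    apply hdet
    rw [← upd_self A i0 j0, hCD, hC, mul_zero, zero_add]
    have := h1; rw [hC, mul_zero, zero_add] at this; exact this
  · rintro (h | h)
    · exact hasNZ_fix_mono ⟨le_refl _, hle i0 j0⟩ h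
    · exact hasNZ_fix_mono ⟨hle i0 j0, le_refl _⟩ h

-- I1
lemma Dsum_fix_of_mem {a b : Matrix (Fin t) (Fin t) ℝ} {i0 j0 : Fin t} (c : ℝ)
    {g : Fin t → Fin t} {T : Finset (Fin t)} (hT : i0 ∈ T) :
    Dsum (upd a i0 j0 c) (upd b i0 j0 c) g T = Dsum a b g T := by
  unfold Dsum
  refine Finset.sum_congr rfl fun π _ => ?_
  have hent : ∀ i, i ≠ i0 → ∀ (A : Matrix (Fin t) (Fin t) ℝ) j,
      upd A i0 j0 c i j = A i j := fun i hi A j => upd_apply_ne A i0 j0 c (fun h => hi h.1)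
  have hcond : (∀ i ∉ T, upd a i0 j0 c i (π i) = upd b i0 j0 c i (π i)) ↔
      (∀ i ∉ T, a i (π i) = b i (π i)) := by
    refine forall_congr' fun i => ?_
    refine imp_congr_right fun hi => ?_
    have hne : i ≠ i0 := fun h => hi (h ▸ hT)
    rw [hent i hne, hent i hne]
  have hprod2 : True := trivial
  have hprod : ∏ i ∈ Tᶜ, upd a i0 j0 c i (π i) = ∏ i ∈ Tᶜ, a i (π i) := by
    refine Finset.prod_congr rfl fun i hi => ?_
    have hne : i ≠ i0 := fun h => (Finset.mem_compl.mp hi) (h ▸ hT)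
    exact hent i hne a (π i)
  simp only [hcond, hprod]

-- I3
lemma Dsum_fix_of_not_mem {a b : Matrix (Fin t) (Fin t) ℝ} {i0 j0 : Fin t} (c : ℝ)
    {g : Fin t → Fin t} {T : Finset (Fin t)} (hT : i0 ∉ T) (hne : a i0 j0 ≠ b i0 j0) :
    Dsum (upd a i0 j0 c) (upd b i0 j0 c) g T =
      Dsum a b g T + c * Dsum a b (Function.update g i0 j0) (insert i0 T) := by
  unfold Dsum
  rw [Finset.mul_sum, ← Finset.sum_add_distrib]
  refine Finset.sum_congr rfl fun π _ => ?_
  have hent : ∀ i, i ≠ i0 → ∀ (A : Matrix (Fin t) (Fin t) ℝ) j,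
      upd A i0 j0 c i j = A i j := fun i hi A j => upd_apply_ne A i0 j0 c (fun h => hi h.1)
  by_cases hπ : π i0 = j0
  · -- first summand on RHS is 0
    have hcond1 : ¬ ((∀ i ∈ T, π i = g i) ∧ (∀ i ∉ T, a i (π i) = b i (π i))) := by
      rintro ⟨-, h2⟩
      exact hne (by simpa [hπ] using h2 i0 hT)
    rw [if_neg hcond1, zero_add]
    have hcond : ((∀ i ∈ T, π i = g i) ∧
          (∀ i ∉ T, upd a i0 j0 c i (π i) = upd b i0 j0 c i (π i))) ↔
        ((∀ i ∈ insert i0 T, π i = Function.update g i0 j0 i) ∧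
          (∀ i ∉ insert i0 T, a i (π i) = b i (π i))) := by
      constructor
      · rintro ⟨h1, h2⟩
        refine ⟨?_, ?_⟩
        · intro i hi
          rcases Finset.mem_insert.mp hi with rfl | hi
          · simpa using hπ
          · rw [Function.update_of_ne (fun h : i = i0 => hT (h ▸ hi))]
            exact h1 i hi
        · intro i hi
          have hiT : i ∉ T := fun h => hi (Finset.mem_insert_of_mem h)
          have hii0 : i ≠ i0 := fun h => hi (h ▸ Finset.mem_insert_self i0 T)
          have := h2 i hiT
          rwa [hent i hii0, hent i hii0] at this
      · rintro ⟨h1, h2⟩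
        refine ⟨fun i hi => by
          have := h1 i (Finset.mem_insert_of_mem hi)
          rwa [Function.update_of_ne (fun h : i = i0 => hT (h ▸ hi))] at this, ?_⟩
        intro i hi
        by_cases hii0 : i = i0
        · subst hii0
          rw [hπ, upd_apply_eq, upd_apply_eq]
        · rw [hent i hii0, hent i hii0]
          exact h2 i (fun h => (Finset.mem_insert.mp h).elim hii0 hi)
    have hprod : ∏ i ∈ Tᶜ, upd a i0 j0 c i (π i) =
        c * ∏ i ∈ (insert i0 T)ᶜ, a i (π i) := by
      rw [Finset.compl_insert,
        ← Finset.mul_prod_erase Tᶜ _ (Finset.mem_compl.mpr hT)]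
      congr 1
      · rw [hπ, upd_apply_eq]
      · exact Finset.prod_congr rfl fun i hi => hent i (Finset.mem_erase.mp hi).1 a (π i)
    simp only [hcond, hprod]
    split_ifs <;> ring
  · -- second summand on RHS is 0
    have hcond2 : ¬ ((∀ i ∈ insert i0 T, π i = Function.update g i0 j0 i) ∧
        (∀ i ∉ insert i0 T, a i (π i) = b i (π i))) := by
      rintro ⟨h1, -⟩
      exact hπ (by simpa using h1 i0 (Finset.mem_insert_self i0 T))
    rw [if_neg hcond2, mul_zero, add_zero]
    have hcond : ((∀ i ∈ T, π i = g i) ∧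
          (∀ i ∉ T, upd a i0 j0 c i (π i) = upd b i0 j0 c i (π i))) ↔
        ((∀ i ∈ T, π i = g i) ∧ (∀ i ∉ T, a i (π i) = b i (π i))) := by
      refine and_congr_right fun _ => forall_congr' fun i => imp_congr_right fun hi => ?_
      by_cases hii0 : i = i0
      · rw [upd_apply_ne a i0 j0 c (fun h => hπ (hii0 ▸ h.2)),
          upd_apply_ne b i0 j0 c (fun h => hπ (hii0 ▸ h.2))]
      · rw [hent i hii0, hent i hii0]
    have hprod : ∏ i ∈ Tᶜ, upd a i0 j0 c i (π i) = ∏ i ∈ Tᶜ, a i (π i) := by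
      refine Finset.prod_congr rfl fun i hi => ?_
      by_cases hii0 : i = i0
      · exact upd_apply_ne a i0 j0 c (fun h => hπ (hii0 ▸ h.2))
      · exact hent i hii0 a (π i)
    simp only [hcond, hprod]

-- I2
lemma Dsum_fix_erase_sub {a b : Matrix (Fin t) (Fin t) ℝ} {i0 j0 : Fin t} (lo hi : ℝ)
    {g : Fin t → Fin t} {T : Finset (Fin t)} (hT : i0 ∈ T) (hg : g i0 = j0) :
    Dsum (upd a i0 j0 lo) (upd b i0 j0 lo) g (T.erase i0) -
      Dsum (upd a i0 j0 hi) (upd b i0 j0 hi) g (T.erase i0) =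
      (lo - hi) * Dsum a b g T := by
  unfold Dsum
  rw [← Finset.sum_sub_distrib, Finset.mul_sum]
  refine Finset.sum_congr rfl fun π _ => ?_
  have hent : ∀ c : ℝ, ∀ i, i ≠ i0 → ∀ (A : Matrix (Fin t) (Fin t) ℝ) j,
      upd A i0 j0 c i j = A i j := fun c i hi A j => upd_apply_ne A i0 j0 c (fun h => hi h.1)
  have hi0T' : i0 ∉ T.erase i0 := Finset.notMem_erase i0 T
  by_cases hπ : π i0 = j0
  · -- conditions for lo/hi both equiv to full condition
    have hcond : ∀ c : ℝ, ((∀ i ∈ T.erase i0, π i = g i) ∧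
          (∀ i ∉ T.erase i0, upd a i0 j0 c i (π i) = upd b i0 j0 c i (π i))) ↔
        ((∀ i ∈ T, π i = g i) ∧ (∀ i ∉ T, a i (π i) = b i (π i))) := by
      intro c
      constructor
      · rintro ⟨h1, h2⟩
        refine ⟨fun i hi => ?_, fun i hi => ?_⟩
        · by_cases hii0 : i = i0
          · rw [hii0, hπ, hg]
          · exact h1 i (Finset.mem_erase.mpr ⟨hii0, hi⟩)
        · have hii0 : i ≠ i0 := fun h => hi (h ▸ hT)
          have := h2 i (fun h => hi (Finset.mem_of_mem_erase h))
          rwa [hent c i hii0, hent c i hii0] at this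
      · rintro ⟨h1, h2⟩
        refine ⟨fun i hi => h1 i (Finset.mem_of_mem_erase hi), fun i hi => ?_⟩
        by_cases hii0 : i = i0
        · rw [hii0, hπ, upd_apply_eq, upd_apply_eq]
        · have hiT : i ∉ T := fun h => hi (Finset.mem_erase.mpr ⟨hii0, h⟩)
          rw [hent c i hii0, hent c i hii0]
          exact h2 i hiT
    have hprod : ∀ c : ℝ, ∏ i ∈ (T.erase i0)ᶜ, upd a i0 j0 c i (π i) =
        c * ∏ i ∈ Tᶜ, a i (π i) := by
      intro c
      have hmem : i0 ∈ (T.erase i0)ᶜ := Finset.mem_compl.mpr hi0T'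
      rw [← Finset.mul_prod_erase _ _ hmem]
      have hset : ((T.erase i0)ᶜ).erase i0 = Tᶜ := by
        ext x
        simp only [Finset.mem_erase, Finset.mem_compl]
        constructor
        · rintro ⟨hx, hx2⟩ hxT
          exact hx2 ⟨hx, hxT⟩
        · intro hx
          have hxi0 : x ≠ i0 := fun h => hx (h ▸ hT)
          exact ⟨hxi0, fun h => hx h.2⟩
      rw [hset]
      congr 1
      · rw [hπ, upd_apply_eq]
      · refine Finset.prod_congr rfl fun i hi => ?_
        have hxi0 : i ≠ i0 := fun h => (Finset.mem_compl.mp hi) (h ▸ hT)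
        exact hent c i hxi0 a (π i)
    simp only [hcond, hprod]
    split_ifs <;> ring
  · -- terms independent of c ; RHS term is 0
    have hcondT : ¬ ((∀ i ∈ T, π i = g i) ∧ (∀ i ∉ T, a i (π i) = b i (π i))) := by
      rintro ⟨h1, -⟩
      exact hπ ((h1 i0 hT).trans hg)
    rw [if_neg hcondT, mul_zero]
    have key : ∀ c : ℝ, (if (∀ i ∈ T.erase i0, π i = g i) ∧
          (∀ i ∉ T.erase i0, upd a i0 j0 c i (π i) = upd b i0 j0 c i (π i)) then
        ((Equiv.Perm.sign π : ℤ) : ℝ) * ∏ i ∈ (T.erase i0)ᶜ, upd a i0 j0 c i (π i) else 0) =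
        (if (∀ i ∈ T.erase i0, π i = g i) ∧
          (∀ i ∉ T.erase i0, a i (π i) = b i (π i)) then
        ((Equiv.Perm.sign π : ℤ) : ℝ) * ∏ i ∈ (T.erase i0)ᶜ, a i (π i) else 0) := by
      intro c
      have hentc : ∀ (A : Matrix (Fin t) (Fin t) ℝ) i, upd A i0 j0 c i (π i) = A i (π i) := by
        intro A i
        by_cases hii0 : i = i0
        · exact upd_apply_ne A i0 j0 c (fun h => hπ (hii0 ▸ h.2))
        · exact hent c i hii0 A (π i)
      simp only [hentc]
    rw [key lo, key hi, sub_self]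

lemma upd_entry_ne {A : Matrix (Fin t) (Fin t) ℝ} {i0 j0 : Fin t} (c : ℝ) {i j : Fin t}
    (h : ¬(i = i0 ∧ j = j0)) : upd A i0 j0 c i j = A i j := upd_apply_ne A i0 j0 c h

lemma GG_split {a b : Matrix (Fin t) (Fin t) ℝ} {i0 j0 : Fin t}
    (hne : a i0 j0 ≠ b i0 j0) :
    GG a b ↔ GG (upd a i0 j0 (a i0 j0)) (upd b i0 j0 (a i0 j0)) ∨
      GG (upd a i0 j0 (b i0 j0)) (upd b i0 j0 (b i0 j0)) := by
  set lo := a i0 j0 with hlo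
  set hi := b i0 j0 with hhi
  constructor
  · rintro ⟨g, T, hnc, hD⟩
    by_cases hmem : i0 ∈ T
    · by_cases hgi : g i0 = j0
      · -- case A : use erase
        have hsub := Dsum_fix_erase_sub (a := a) (b := b) lo hi hmem hgi
        have hnz : (lo - hi) * Dsum a b g T ≠ 0 :=
          mul_ne_zero (sub_ne_zero.mpr hne) hD
        have hnc' : ∀ c : ℝ, ∀ i ∈ T.erase i0,
            upd a i0 j0 c i (g i) ≠ upd b i0 j0 c i (g i) := by
          intro c i hi'
          have hii0 : ¬(i = i0 ∧ g i = j0) := fun h => (Finset.mem_erase.mp hi').1 h.1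
          rw [upd_entry_ne c hii0, upd_entry_ne c hii0]
          exact hnc i (Finset.mem_of_mem_erase hi')
        by_cases h1 : Dsum (upd a i0 j0 lo) (upd b i0 j0 lo) g (T.erase i0) ≠ 0
        · exact Or.inl ⟨g, T.erase i0, hnc' lo, h1⟩
        · push_neg at h1
          refine Or.inr ⟨g, T.erase i0, hnc' hi, fun h2 => hnz ?_⟩
          rw [← hsub, h1, h2, sub_zero]
      · -- entry not on diagonal of T : direct transfer
        have hD' := Dsum_fix_of_mem (a := a) (b := b) (i0 := i0) (j0 := j0) lo
          (g := g) (T := T) hmem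
        refine Or.inl ⟨g, T, fun i hi' => ?_, by rw [hD']; exact hD⟩
        have hii0 : ¬(i = i0 ∧ g i = j0) := fun h => hgi (h.1 ▸ h.2)
        rw [upd_entry_ne lo hii0, upd_entry_ne lo hii0]
        exact hnc i hi'
    · -- i0 ∉ T
      have h3lo := Dsum_fix_of_not_mem (a := a) (b := b) lo (g := g) (T := T) hmem hne
      have h3hi := Dsum_fix_of_not_mem (a := a) (b := b) hi (g := g) (T := T) hmem hne
      have hnc' : ∀ c : ℝ, ∀ i ∈ T,
          upd a i0 j0 c i (g i) ≠ upd b i0 j0 c i (g i) := by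
        intro c i hi'
        have hii0 : ¬(i = i0 ∧ g i = j0) := fun h => hmem (h.1 ▸ hi')
        rw [upd_entry_ne c hii0, upd_entry_ne c hii0]
        exact hnc i hi'
      by_cases h1 : Dsum (upd a i0 j0 lo) (upd b i0 j0 lo) g T ≠ 0
      · exact Or.inl ⟨g, T, hnc' lo, h1⟩
      · push_neg at h1
        refine Or.inr ⟨g, T, hnc' hi, fun h2 => ?_⟩
        rw [h3lo] at h1
        rw [h3hi] at h2
        have hE : (lo - hi) * Dsum a b (Function.update g i0 j0) (insert i0 T) = 0 := by
          ring_nf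
          ring_nf at h1 h2
          linarith
        rcases mul_eq_zero.mp hE with h | h
        · exact hne (sub_eq_zero.mp h)
        · rw [h, mul_zero, add_zero] at h1
          exact hD h1
  · -- backward
    have key : ∀ c : ℝ, GG (upd a i0 j0 c) (upd b i0 j0 c) → GG a b := by
      rintro c ⟨g, T, hnc, hD⟩
      by_cases hmem : i0 ∈ T
      · have hgi : ¬ g i0 = j0 := by
          intro h
          apply hnc i0 hmem
          have h1 : upd a i0 j0 c i0 (g i0) = c := by rw [h]; exact upd_apply_eq a i0 j0 c
          have h2 : upd b i0 j0 c i0 (g i0) = c := by rw [h]; exact upd_apply_eq b i0 j0 c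
          rw [h1, h2]
        rw [Dsum_fix_of_mem c hmem] at hD
        refine ⟨g, T, fun i hi' => ?_, hD⟩
        have hii0 : ¬(i = i0 ∧ g i = j0) := fun h => hgi (h.1 ▸ h.2)
        have := hnc i hi'
        rwa [upd_entry_ne c hii0, upd_entry_ne c hii0] at this
      · rw [Dsum_fix_of_not_mem c hmem hne] at hD
        by_cases hDab : Dsum a b g T ≠ 0
        · refine ⟨g, T, fun i hi' => ?_, hDab⟩
          have hii0 : ¬(i = i0 ∧ g i = j0) := fun h => hmem (h.1 ▸ hi')
          have := hnc i hi'
          rwa [upd_entry_ne c hii0, upd_entry_ne c hii0] at this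
        · push_neg at hDab
          rw [hDab, zero_add] at hD
          have hE : Dsum a b (Function.update g i0 j0) (insert i0 T) ≠ 0 :=
            fun h => hD (by rw [h, mul_zero])
          refine ⟨Function.update g i0 j0, insert i0 T, fun i hi' => ?_, hE⟩
          rcases Finset.mem_insert.mp hi' with rfl | hi'
          · rw [Function.update_self]
            exact hne
          · have hii0 : i ≠ i0 := fun h => hmem (h ▸ hi')
            rw [Function.update_of_ne hii0]
            have := hnc i hi'
            have hcond : ¬(i = i0 ∧ g i = j0) := fun h => hii0 h.1
            rwa [upd_entry_ne c hcond, upd_entry_ne c hcond] at this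
    rintro (h | h)
    · exact key lo h
    · exact key hi h

lemma Dsum_empty (a : Matrix (Fin t) (Fin t) ℝ) (g : Fin t → Fin t) :
    Dsum a a g ∅ = a.det := by
  rw [← Matrix.det_transpose, Matrix.det_apply']
  unfold Dsum
  refine Finset.sum_congr rfl fun π _ => ?_
  rw [if_pos ⟨fun i hi => absurd hi (Finset.notMem_empty i), fun _ _ => rfl⟩,
    Finset.compl_empty]
  rfl

lemma hasNZ_iff_GG_const {a : Matrix (Fin t) (Fin t) ℝ} : HasNZ a a ↔ GG a a := by
  constructor
  · rintro ⟨A, hbox, hdet⟩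
    have hA : A = a := by
      ext i j
      exact le_antisymm (hbox i j).2 (hbox i j).1
    exact ⟨id, ∅, fun i hi => absurd hi (Finset.notMem_empty i),
      by rw [Dsum_empty]; exact hA ▸ hdet⟩
  · rintro ⟨g, T, hnc, hD⟩
    have hT : T = ∅ := by
      rcases Finset.eq_empty_or_nonempty T with h | ⟨i, hi⟩
      · exact h
      · exact absurd rfl (hnc i hi)
    rw [hT, Dsum_empty] at hD
    exact ⟨a, fun i j => ⟨le_refl _, le_refl _⟩, hD⟩

lemma hasNZ_iff_GG : ∀ (n : ℕ) (a b : Matrix (Fin t) (Fin t) ℝ),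
    (∀ i j, a i j ≤ b i j) →
    (Finset.univ.filter fun e : Fin t × Fin t => a e.1 e.2 ≠ b e.1 e.2).card ≤ n →
    (HasNZ a b ↔ GG a b) := by
  intro n
  induction n with
  | zero =>
    intro a b hle hcard
    have hab : a = b := by
      ext i j
      by_contra h
      have : (i, j) ∈ Finset.univ.filter
          fun e : Fin t × Fin t => a e.1 e.2 ≠ b e.1 e.2 :=
        Finset.mem_filter.mpr ⟨Finset.mem_univ _, h⟩
      have := Finset.card_pos.mpr ⟨_, this⟩
      omega
    subst hab
    exact hasNZ_iff_GG_const
  | succ n ih =>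
    intro a b hle hcard
    by_cases hc : (Finset.univ.filter
        fun e : Fin t × Fin t => a e.1 e.2 ≠ b e.1 e.2).card ≤ n
    · exact ih a b hle hc
    · -- there is a nonconstant entry
      have hne0 : (Finset.univ.filter
          fun e : Fin t × Fin t => a e.1 e.2 ≠ b e.1 e.2).Nonempty := by
        rw [Finset.nonempty_iff_ne_empty]
        intro h
        rw [h] at hc
        simp at hc
      obtain ⟨e, he⟩ := hne0
      obtain ⟨i0, j0⟩ := e
      have hne : a i0 j0 ≠ b i0 j0 := (Finset.mem_filter.mp he).2
      -- filter set of updated matrices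
      have hfilt : ∀ c : ℝ, (Finset.univ.filter fun e : Fin t × Fin t =>
          upd a i0 j0 c e.1 e.2 ≠ upd b i0 j0 c e.1 e.2) =
          (Finset.univ.filter fun e : Fin t × Fin t =>
            a e.1 e.2 ≠ b e.1 e.2).erase (i0, j0) := by
        intro c
        ext x
        simp only [Finset.mem_filter, Finset.mem_erase, Finset.mem_univ, true_and]
        by_cases hx : x.1 = i0 ∧ x.2 = j0
        · have hxe : x = (i0, j0) := Prod.ext hx.1 hx.2
          have h1 : upd a i0 j0 c x.1 x.2 = c := by
            rw [hx.1, hx.2]; exact upd_apply_eq a i0 j0 c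
          have h2 : upd b i0 j0 c x.1 x.2 = c := by
            rw [hx.1, hx.2]; exact upd_apply_eq b i0 j0 c
          rw [h1, h2]
          simp [hxe]
        · rw [upd_apply_ne a i0 j0 c hx, upd_apply_ne b i0 j0 c hx]
          have hxe : x ≠ (i0, j0) := fun h => hx ⟨by rw [h], by rw [h]⟩
          simp [hxe]
      have hcard' : ∀ c : ℝ, (Finset.univ.filter fun e : Fin t × Fin t =>
          upd a i0 j0 c e.1 e.2 ≠ upd b i0 j0 c e.1 e.2).card ≤ n := by
        intro c
        rw [hfilt c, Finset.card_erase_of_mem he]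
        omega
      have hle' : ∀ c : ℝ, ∀ i j, upd a i0 j0 c i j ≤ upd b i0 j0 c i j := by
        intro c i j
        by_cases hx : i = i0 ∧ j = j0
        · obtain ⟨rfl, rfl⟩ := hx
          rw [upd_apply_eq, upd_apply_eq]
        · rw [upd_apply_ne a i0 j0 c hx, upd_apply_ne b i0 j0 c hx]
          exact hle i j
      rw [hasNZ_split hle hne, GG_split hne,
        ih _ _ (hle' (a i0 j0)) (hcard' (a i0 j0)),
        ih _ _ (hle' (b i0 j0)) (hcard' (b i0 j0))]

lemma bridge {t k : ℕ} (a b : Matrix (Fin t) (Fin t) ℝ) (I J : Fin k → Fin t)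
    (hI : Function.Injective I) (hJ : Function.Injective J) :
    ∃ g : Fin t → Fin t, (∀ i, g (I i) = J i) ∧
      ∃ ε : ℝ, (ε = 1 ∨ ε = -1) ∧
        Dsum a b g (Finset.univ.image I) =
          ε * detc (complMatrix a I J hI hJ) (complMatrix b I J hI hJ) := by
  classical
  set n := t - k with hn
  set R : Finset (Fin t) := Finset.univ.image I with hR
  set C : Finset (Fin t) := Finset.univ.image J with hC
  have hcR : Rᶜ.card = n := by
    simp [hR, hn, Finset.card_compl, Finset.card_image_of_injective _ hI]
  have hcC : Cᶜ.card = n := by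
    simp [hC, hn, Finset.card_compl, Finset.card_image_of_injective _ hJ]
  set u : Fin n ≃o {x // x ∈ Rᶜ} := Rᶜ.orderIsoOfFin hcR with hu
  set v : Fin n ≃o {x // x ∈ Cᶜ} := Cᶜ.orderIsoOfFin hcC with hv
  have hcomplA : ∀ x y, complMatrix a I J hI hJ x y = a ↑(u x) ↑(v y) := fun x y => rfl
  have hcomplB : ∀ x y, complMatrix b I J hI hJ x y = b ↑(u x) ↑(v y) := fun x y => rfl
  -- the function g
  set g : Fin t → Fin t := fun r => if h : ∃ i, I i = r then J (Classical.choose h) else r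
    with hgdef
  have hg : ∀ i, g (I i) = J i := by
    intro i
    have hex : ∃ i', I i' = I i := ⟨i, rfl⟩
    simp only [hgdef, dif_pos hex]
    congr 1
    exact hI (Classical.choose_spec hex)
  -- membership facts
  have hmemR : ∀ i, I i ∈ R := fun i => Finset.mem_image.mpr ⟨i, Finset.mem_univ i, rfl⟩
  have hmemC : ∀ i, J i ∈ C := fun i => Finset.mem_image.mpr ⟨i, Finset.mem_univ i, rfl⟩
  have huRc : ∀ x, (↑(u x) : Fin t) ∉ R := fun x => Finset.mem_compl.mp (u x).2
  have hvCc : ∀ x, (↑(v x) : Fin t) ∉ C := fun x => Finset.mem_compl.mp (v x).2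
  -- the base permutation σ₀
  set f : Fin t → Fin t := fun r =>
    if h : r ∈ R then g r else ↑(v (u.symm ⟨r, Finset.mem_compl.mpr h⟩)) with hfdef
  have hfR : ∀ i, f (I i) = J i := by
    intro i
    simp only [hfdef, dif_pos (hmemR i)]
    exact hg i
  have hfRc : ∀ x, f ↑(u x) = ↑(v x) := by
    intro x
    simp only [hfdef, dif_neg (huRc x)]
    congr 1
    have : (⟨↑(u x), Finset.mem_compl.mpr (huRc x)⟩ : {y // y ∈ Rᶜ}) = u x :=
      Subtype.ext rfl
    rw [this, OrderIso.symm_apply_apply]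
  have hf_inj : Function.Injective f := by
    intro r1 r2 heq
    by_cases h1 : r1 ∈ R <;> by_cases h2 : r2 ∈ R
    · obtain ⟨i1, -, rfl⟩ := Finset.mem_image.mp h1
      obtain ⟨i2, -, rfl⟩ := Finset.mem_image.mp h2
      rw [hfR, hfR] at heq
      exact congrArg I (hJ heq)
    · obtain ⟨i1, -, rfl⟩ := Finset.mem_image.mp h1
      rw [hfR] at heq
      exfalso
      set x := u.symm ⟨r2, Finset.mem_compl.mpr h2⟩ with hx
      have : f r2 = ↑(v x) := by simp only [hfdef, dif_neg h2, hx]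
      rw [this] at heq
      exact hvCc x (heq ▸ hmemC i1)
    · obtain ⟨i2, -, rfl⟩ := Finset.mem_image.mp h2
      rw [hfR] at heq
      exfalso
      set x := u.symm ⟨r1, Finset.mem_compl.mpr h1⟩ with hx
      have : f r1 = ↑(v x) := by simp only [hfdef, dif_neg h1, hx]
      rw [this] at heq
      exact hvCc x (heq.symm ▸ hmemC i2)
    · have e1 : f r1 = ↑(v (u.symm ⟨r1, Finset.mem_compl.mpr h1⟩)) := by
        simp only [hfdef, dif_neg h1]
      have e2 : f r2 = ↑(v (u.symm ⟨r2, Finset.mem_compl.mpr h2⟩)) := by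
        simp only [hfdef, dif_neg h2]
      rw [e1, e2] at heq
      have h3 := u.symm.injective (v.injective (Subtype.ext heq))
      exact congrArg Subtype.val h3
  have hf_bij : Function.Bijective f := Finite.injective_iff_bijective.mp hf_inj
  set σ₀ : Equiv.Perm (Fin t) := Equiv.ofBijective f hf_bij with hσ₀
  have hσR : ∀ i, σ₀ (I i) = J i := hfR
  have hσRc : ∀ x, σ₀ ↑(u x) = ↑(v x) := hfRc
  -- extension of permutations of the complement
  set w : Equiv.Perm (Fin n) → Equiv.Perm (Fin t) := fun ρ =>
    ρ.extendDomain v.toEquiv with hw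
  have hwv : ∀ ρ x, w ρ ↑(v x) = ↑(v (ρ x)) := fun ρ x =>
    Equiv.Perm.extendDomain_apply_image ρ v.toEquiv x
  have hwfix : ∀ ρ (r : Fin t), r ∈ C → w ρ r = r := fun ρ r hr =>
    Equiv.Perm.extendDomain_apply_not_subtype ρ v.toEquiv (by simpa using hr)
  set Φ : Equiv.Perm (Fin n) → Equiv.Perm (Fin t) := fun ρ => σ₀.trans (w ρ) with hΦ
  have hΦI : ∀ ρ i, Φ ρ (I i) = J i := by
    intro ρ i
    show w ρ (σ₀ (I i)) = J i
    rw [hσR, hwfix ρ _ (hmemC i)]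
  have hΦu : ∀ ρ x, Φ ρ ↑(u x) = ↑(v (ρ x)) := by
    intro ρ x
    show w ρ (σ₀ ↑(u x)) = ↑(v (ρ x))
    rw [hσRc, hwv]
  refine ⟨g, hg, ((Equiv.Perm.sign σ₀ : ℤ) : ℝ), ?_, ?_⟩
  · rcases Int.units_eq_one_or (Equiv.Perm.sign σ₀) with h | h <;> rw [h] <;> simp
  -- main sum computation
  unfold Dsum detc
  rw [Finset.mul_sum]
  have hstep1 : (∑ π : Equiv.Perm (Fin t),
      if (∀ i ∈ R, π i = g i) ∧ (∀ i ∉ R, a i (π i) = b i (π i)) then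
        ((Equiv.Perm.sign π : ℤ) : ℝ) * ∏ i ∈ Rᶜ, a i (π i) else 0) =
      ∑ π ∈ Finset.univ.filter (fun π : Equiv.Perm (Fin t) => ∀ i ∈ R, π i = g i),
        (if (∀ i ∉ R, a i (π i) = b i (π i)) then
          ((Equiv.Perm.sign π : ℤ) : ℝ) * ∏ i ∈ Rᶜ, a i (π i) else 0) := by
    rw [Finset.sum_filter]
    refine Finset.sum_congr rfl fun π _ => ?_
    by_cases h1 : ∀ i ∈ R, π i = g i
    · by_cases h2 : ∀ i ∉ R, a i (π i) = b i (π i)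
      · rw [if_pos ⟨h1, h2⟩, if_pos h1, if_pos h2]
      · rw [if_neg (fun h => h2 h.2), if_pos h1, if_neg h2]
    · rw [if_neg (fun h => h1 h.1), if_neg h1]
  rw [hstep1]
  refine (Finset.sum_bij (fun ρ _ => Φ ρ) ?_ ?_ ?_ ?_).symm
  · -- maps into the filter
    intro ρ _
    refine Finset.mem_filter.mpr ⟨Finset.mem_univ _, fun i' hi' => ?_⟩
    obtain ⟨i, -, rfl⟩ := Finset.mem_image.mp hi'
    rw [hΦI, hg]
  · -- injective
    intro ρ1 _ ρ2 _ heq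
    refine Equiv.ext fun x => ?_
    have h := Equiv.ext_iff.mp heq (↑(u x))
    rw [hΦu, hΦu] at h
    exact v.injective (Subtype.ext h)
  · -- surjective
    intro π hπ
    have hP : ∀ i ∈ R, π i = g i := (Finset.mem_filter.mp hπ).2
    have hπI : ∀ i, π (I i) = J i := fun i => (hP _ (hmemR i)).trans (hg i)
    have hπu : ∀ x, π ↑(u x) ∈ Cᶜ := by
      intro x
      refine Finset.mem_compl.mpr fun hc => ?_
      obtain ⟨i, -, hJi⟩ := Finset.mem_image.mp hc
      have : π ↑(u x) = π (I i) := by rw [hπI, hJi]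
      exact huRc x (π.injective this ▸ hmemR i)
    have hρinj : Function.Injective (fun x => v.symm ⟨π ↑(u x), hπu x⟩) := by
      intro x1 x2 h
      have h2 := Subtype.ext_iff.mp (v.symm.injective h)
      exact u.injective (Subtype.ext (π.injective h2))
    refine ⟨Equiv.ofBijective _ (Finite.injective_iff_bijective.mp hρinj),
      Finset.mem_univ _, ?_⟩
    refine Equiv.ext fun r => ?_
    by_cases hr : r ∈ R
    · obtain ⟨i, -, rfl⟩ := Finset.mem_image.mp hr
      rw [hΦI, hπI]
    · have hux : (↑(u (u.symm ⟨r, Finset.mem_compl.mpr hr⟩)) : Fin t) = r := by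
        rw [OrderIso.apply_symm_apply]
      conv_lhs => rw [← hux]
      rw [hΦu]
      show (↑(v ((Equiv.ofBijective _ (Finite.injective_iff_bijective.mp hρinj))
        (u.symm ⟨r, Finset.mem_compl.mpr hr⟩))) : Fin t) = π r
      have : (Equiv.ofBijective _ (Finite.injective_iff_bijective.mp hρinj))
            (u.symm ⟨r, Finset.mem_compl.mpr hr⟩) =
          v.symm ⟨π ↑(u (u.symm ⟨r, Finset.mem_compl.mpr hr⟩)),
            hπu (u.symm ⟨r, Finset.mem_compl.mpr hr⟩)⟩ := rfl
      have h5 := OrderIso.apply_symm_apply v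
        ⟨π ↑(u (u.symm ⟨r, Finset.mem_compl.mpr hr⟩)),
          hπu (u.symm ⟨r, Finset.mem_compl.mpr hr⟩)⟩
      exact (congrArg Subtype.val h5).trans (congrArg π hux)
  · -- terms agree
    intro ρ _
    have hQ : (∀ i ∉ R, a i (Φ ρ i) = b i (Φ ρ i)) ↔
        (∀ x, complMatrix a I J hI hJ x (ρ x) = complMatrix b I J hI hJ x (ρ x)) := by
      constructor
      · intro h x
        rw [hcomplA, hcomplB, ← hΦu ρ x]
        exact h _ (huRc x)
      · intro h i hi
        have hux : (↑(u (u.symm ⟨i, Finset.mem_compl.mpr hi⟩)) : Fin t) = i := by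
          rw [OrderIso.apply_symm_apply]
        rw [← hux, hΦu]
        have := h (u.symm ⟨i, Finset.mem_compl.mpr hi⟩)
        rwa [hcomplA, hcomplB] at this
    have hprod : ∏ i ∈ Rᶜ, a i (Φ ρ i) = ∏ x, complMatrix a I J hI hJ x (ρ x) := by
      refine (Finset.prod_bij (fun x _ => (↑(u x) : Fin t)) ?_ ?_ ?_ ?_).symm
      · exact fun x _ => (u x).2
      · exact fun x1 _ x2 _ h => u.injective (Subtype.ext h)
      · intro i hi
        exact ⟨u.symm ⟨i, hi⟩, Finset.mem_univ _,
          congrArg Subtype.val (OrderIso.apply_symm_apply u ⟨i, hi⟩)⟩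
      · intro x _
        rw [hcomplA, hΦu]
    have hsign : ((Equiv.Perm.sign (Φ ρ) : ℤ) : ℝ) =
        ((Equiv.Perm.sign ρ : ℤ) : ℝ) * ((Equiv.Perm.sign σ₀ : ℤ) : ℝ) := by
      have h1 : Φ ρ = (w ρ) * σ₀ := rfl
      rw [h1, Equiv.Perm.sign_mul]
      have h2 : Equiv.Perm.sign (w ρ) = Equiv.Perm.sign ρ :=
        Equiv.Perm.sign_extendDomain ρ v.toEquiv
      rw [h2]
      push_cast
      ring
    simp only [hQ]
    split_ifs with h
    · rw [hsign, hprod]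
      ring
    · rw [mul_zero]

variable (a b : Matrix (Fin t) (Fin t) ℝ)

lemma Dsum_univ_perm (σ : Equiv.Perm (Fin t)) :
    Dsum a b σ Finset.univ = ((Equiv.Perm.sign σ : ℤ) : ℝ) := by
  unfold Dsum
  rw [Finset.sum_eq_single σ]
  · rw [if_pos ⟨fun i _ => rfl, fun i hi => absurd (Finset.mem_univ i) hi⟩,
      Finset.compl_univ, Finset.prod_empty, mul_one]
  · intro π _ hπ
    rw [if_neg]
    rintro ⟨h1, -⟩
    exact hπ (Equiv.ext fun i => h1 i (Finset.mem_univ i))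
  · intro h
    exact absurd (Finset.mem_univ σ) h

lemma sign_cast_ne_zero (σ : Equiv.Perm (Fin t)) :
    ((Equiv.Perm.sign σ : ℤ) : ℝ) ≠ 0 := by
  rcases Int.units_eq_one_or (Equiv.Perm.sign σ) with h | h <;> rw [h] <;> norm_num

lemma GG_of_isGood (h : IsGoodSquare a b) : GG a b := by
  rcases h with ⟨σ, hσ⟩ | ⟨k, hk, I, J, hI, hJ, hnc, hdetc⟩
  · exact ⟨σ, Finset.univ, fun i _ => hσ i,
      by rw [Dsum_univ_perm]; exact sign_cast_ne_zero σ⟩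
  · obtain ⟨g, hg, ε, hε, hDs⟩ := bridge a b I J hI hJ
    refine ⟨g, Finset.univ.image I, fun i' hi' => ?_, ?_⟩
    · obtain ⟨i, -, rfl⟩ := Finset.mem_image.mp hi'
      rw [hg]
      exact hnc i
    · rw [hDs]
      refine mul_ne_zero ?_ hdetc
      rcases hε with h | h <;> rw [h] <;> norm_num

lemma isGood_of_GG (h : GG a b) : IsGoodSquare a b := by
  obtain ⟨g, T, hnc, hD⟩ := h
  have hex : ∃ π : Equiv.Perm (Fin t),
      (∀ i ∈ T, π i = g i) ∧ (∀ i ∉ T, a i (π i) = b i (π i)) := by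
    by_contra hno
    push_neg at hno
    apply hD
    unfold Dsum
    refine Finset.sum_eq_zero fun π _ => if_neg ?_
    rintro ⟨h1, h2⟩
    obtain ⟨i, hi, hne⟩ := hno π h1
    exact hne (h2 i hi)
  obtain ⟨π, hπT, -⟩ := hex
  by_cases hTu : T = Finset.univ
  · subst hTu
    refine Or.inl ⟨π, fun i => ?_⟩
    rw [hπT i (Finset.mem_univ i)]
    exact hnc i (Finset.mem_univ i)
  · -- T is a proper subset
    set k := T.card with hkdef
    have hkt : k < t := by
      have := Finset.card_lt_card (Finset.ssubset_univ_iff.mpr hTu)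
      simpa using this
    have hk : k ≤ t - 1 := by omega
    set I : Fin k → Fin t := fun x => ↑(T.orderIsoOfFin rfl x) with hIdef
    have hI : Function.Injective I := fun x1 x2 h =>
      (T.orderIsoOfFin rfl).injective (Subtype.ext h)
    have hIT : ∀ x, I x ∈ T := fun x => (T.orderIsoOfFin rfl x).2
    have himg : Finset.univ.image I = T := by
      refine Finset.eq_of_subset_of_card_le (fun x hx => ?_) ?_
      · obtain ⟨i, -, rfl⟩ := Finset.mem_image.mp hx
        exact hIT i
      · rw [Finset.card_image_of_injective _ hI, Finset.card_univ, Fintype.card_fin]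
    have hgInj : Set.InjOn g T := by
      intro i1 h1 i2 h2 heq
      exact π.injective ((hπT i1 h1).trans (heq.trans (hπT i2 h2).symm))
    set J : Fin k → Fin t := g ∘ I with hJdef
    have hJ : Function.Injective J := by
      intro x1 x2 h
      exact hI (hgInj (hIT x1) (hIT x2) h)
    obtain ⟨g', hg', ε, hε, hDs⟩ := bridge a b I J hI hJ
    refine Or.inr ⟨k, hk, I, J, hI, hJ, fun i => ?_, ?_⟩
    · exact hnc (I i) (hIT i)
    · have key : Dsum a b g T =
          ε * detc (complMatrix a I J hI hJ) (complMatrix b I J hI hJ) := by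
        rw [← himg]
        rw [Dsum_congr a b (g' := g') (T := Finset.univ.image I) (fun i hi => by
          obtain ⟨x, -, rfl⟩ := Finset.mem_image.mp hi
          rw [hg' x]
          rfl)]
        exact hDs
      intro hzero
      rw [hzero, mul_zero] at key
      exact hD key

-- R1
lemma rank_ge_of_submatrix_det_ne_zero {p q t : ℕ} (A : Matrix (Fin p) (Fin q) ℝ)
    (I : Fin t → Fin p) (J : Fin t → Fin q)
    (h : (A.submatrix I J).det ≠ 0) : t ≤ A.rank := by
  classical
  set P : Matrix (Fin t) (Fin p) ℝ := Matrix.of fun x i => if I x = i then 1 else 0 with hP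
  set Q : Matrix (Fin q) (Fin t) ℝ := Matrix.of fun j y => if J y = j then 1 else 0 with hQ
  have hPA : P * A = A.submatrix I id := by
    ext x j
    rw [Matrix.mul_apply]
    simp only [hP, Matrix.of_apply]
    simp only [ite_mul, one_mul, zero_mul]
    rw [Finset.sum_ite_eq Finset.univ (I x) (fun i => A i j)]
    simp [Matrix.submatrix_apply]
  have hAQ : A.submatrix I id * Q = A.submatrix I J := by
    ext x y
    rw [Matrix.mul_apply]
    simp only [hQ, Matrix.of_apply, Matrix.submatrix_apply, id]
    simp only [mul_ite, mul_one, mul_zero]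
    rw [Finset.sum_ite_eq Finset.univ (J y) (fun j => A (I x) j)]
    simp
  have hfact : P * A * Q = A.submatrix I J := by rw [hPA, hAQ]
  have hunit : IsUnit (A.submatrix I J) :=
    (Matrix.isUnit_iff_isUnit_det _).mpr (isUnit_iff_ne_zero.mpr h)
  have hr : (A.submatrix I J).rank = t := by
    rw [Matrix.rank_of_isUnit _ hunit, Fintype.card_fin]
  calc t = (A.submatrix I J).rank := hr.symm
    _ = (P * A * Q).rank := by rw [hfact]
    _ ≤ (P * A).rank := Matrix.rank_mul_le_left _ _
    _ ≤ A.rank := Matrix.rank_mul_le_right _ _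

-- column selection
lemma colsel {p q r : ℕ} (A : Matrix (Fin p) (Fin q) ℝ) (hr : A.rank = r) :
    ∃ J : Fin r → Fin q, Function.Injective J ∧
      LinearIndependent ℝ (fun j => Aᵀ (J j)) := by
  classical
  have hspan := Matrix.rank_eq_finrank_span_cols A
  obtain ⟨s, hsub, hspaneq, hli⟩ := exists_linearIndependent ℝ (Set.range Aᵀ)
  have hfin : s.Finite := (Set.finite_range Aᵀ).subset hsub
  haveI : Fintype s := hfin.fintype
  have hcard : s.toFinset.card = r := by
    have h1 := finrank_span_set_eq_card hli
    rw [hspaneq] at h1; rw [← hr, hspan]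
    exact h1.symm
  have hcard2 : Fintype.card s = r := by rw [← Set.toFinset_card, hcard]
  obtain ⟨e⟩ : Nonempty (Fin r ≃ s) := ⟨(Fintype.equivFinOfCardEq hcard2).symm⟩
  have hchoice : ∀ i : Fin r, ∃ j : Fin q, Aᵀ j = ↑(e i) := fun i => hsub (e i).2
  set J : Fin r → Fin q := fun i => Classical.choose (hchoice i) with hJ
  have hJspec : ∀ i, Aᵀ (J i) = ↑(e i) := fun i => Classical.choose_spec (hchoice i)
  refine ⟨J, ?_, ?_⟩
  · intro i1 i2 h
    have : Aᵀ (J i1) = Aᵀ (J i2) := by rw [h]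
    rw [hJspec, hJspec] at this
    exact e.injective (Subtype.ext this)
  · have hfam : (fun j => Aᵀ (J j)) = (Subtype.val : s → (Fin p → ℝ)) ∘ ⇑e := by
      funext i
      exact hJspec i
    rw [hfam]
    exact hli.comp (⇑e) e.injective

-- R2
lemma exists_submatrix_det_ne_zero {p q : ℕ} (A : Matrix (Fin p) (Fin q) ℝ) :
    ∃ (I : Fin A.rank → Fin p) (J : Fin A.rank → Fin q),
      Function.Injective I ∧ Function.Injective J ∧ (A.submatrix I J).det ≠ 0 := by
  classical
  set r := A.rank with hr
  obtain ⟨J, hJinj, hliJ⟩ := colsel A rfl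
  set B : Matrix (Fin p) (Fin r) ℝ := A.submatrix id J with hB
  have hBT : Bᵀ = fun j => Aᵀ (J j) := rfl
  have hrankB : B.rank = r := by
    rw [Matrix.rank_eq_finrank_span_cols]
    change Module.finrank ℝ (Submodule.span ℝ (Set.range (fun j => Aᵀ (J j)))) = r
    have := finrank_span_eq_card hliJ
    rw [this, Fintype.card_fin]
  have hrankBT : Bᵀ.rank = r := by rw [Matrix.rank_transpose]; exact hrankB
  obtain ⟨I, hIinj, hliI⟩ := colsel Bᵀ hrankBT
  set C : Matrix (Fin r) (Fin r) ℝ := A.submatrix I J with hC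
  have hCrows : (fun x => C x) = (fun x => Bᵀᵀ (I x)) := rfl
  have hliC : LinearIndependent ℝ (fun x => C x) := by rw [hCrows]; exact hliI
  have hunit : IsUnit C := Matrix.linearIndependent_rows_iff_isUnit.mp hliC
  exact ⟨I, J, hIinj, hJinj, ((Matrix.isUnit_iff_isUnit_det _).mp hunit).ne_zero⟩

/-- HasNZ ↔ IsGoodSquare, combining the core induction with the bridge. -/
lemma hasNZ_iff_isGood {a b : Matrix (Fin t) (Fin t) ℝ} (hle : ∀ i j, a i j ≤ b i j) :
    HasNZ a b ↔ IsGoodSquare a b :=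
  (hasNZ_iff_GG _ a b hle le_rfl).trans ⟨isGood_of_GG a b, GG_of_isGood a b⟩

end MrkAux

/-- For a p×q interval matrix μ, Mrk(μ) equals the maximum of the
natural numbers t such that μ has a t×t submatrix which is good in the above sense. -/
theorem Mrk_eq_max_good_submatrix (p q : ℕ) (m M : Matrix (Fin p) (Fin q) ℝ)
    (hle : ∀ i j, m i j ≤ M i j) :
    sSup {r : ℕ | ∃ A : Matrix (Fin p) (Fin q) ℝ,
        (∀ i j, A i j ∈ Set.Icc (m i j) (M i j)) ∧ A.rank = r} =
      sSup {t : ℕ | ∃ (I : Fin t → Fin p) (J : Fin t → Fin q),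
        Function.Injective I ∧ Function.Injective J ∧
          IsGoodSquare (m.submatrix I J) (M.submatrix I J)} := by
  classical
  set Sl := {r : ℕ | ∃ A : Matrix (Fin p) (Fin q) ℝ,
      (∀ i j, A i j ∈ Set.Icc (m i j) (M i j)) ∧ A.rank = r} with hSl
  set Sr := {t : ℕ | ∃ (I : Fin t → Fin p) (J : Fin t → Fin q),
      Function.Injective I ∧ Function.Injective J ∧
        IsGoodSquare (m.submatrix I J) (M.submatrix I J)} with hSr
  have hSlne : Sl.Nonempty := ⟨m.rank, m, fun i j => ⟨le_refl _, hle i j⟩, rfl⟩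
  have hSlbdd : BddAbove Sl := by
    refine ⟨p, fun r hr => ?_⟩
    obtain ⟨A, -, rfl⟩ := hr
    exact Matrix.rank_le_height A
  have hSrbdd : BddAbove Sr := by
    refine ⟨p, fun s hs => ?_⟩
    obtain ⟨I, -, hI, -, -⟩ := hs
    simpa using Fintype.card_le_of_injective I hI
  have hSrne : Sr.Nonempty := by
    refine ⟨0, Fin.elim0, Fin.elim0, fun x => x.elim0, fun x => x.elim0, Or.inl ⟨1, fun i => i.elim0⟩⟩
  have hlesub : ∀ {s : ℕ} (I : Fin s → Fin p) (J : Fin s → Fin q) (i j : Fin s),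
      (m.submatrix I J) i j ≤ (M.submatrix I J) i j := fun I J i j => hle (I i) (J j)
  refine le_antisymm ?_ ?_
  · -- Sl ⊆ Sr
    refine csSup_le_csSup hSrbdd hSlne ?_
    rintro r ⟨A, hbox, rfl⟩
    obtain ⟨I, J, hI, hJ, hdet⟩ := exists_submatrix_det_ne_zero A
    refine ⟨I, J, hI, hJ, ?_⟩
    refine (hasNZ_iff_isGood fun i j => hlesub I J i j).mp ?_
    exact ⟨A.submatrix I J, fun i j => hbox (I i) (J j), hdet⟩
  · -- each t ∈ Sr is ≤ sSup Sl
    refine csSup_le hSrne ?_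
    rintro s ⟨I, J, hI, hJ, hgood⟩
    obtain ⟨A', hbox', hdet'⟩ :=
      (hasNZ_iff_isGood fun i j => hlesub I J i j).mpr hgood
    -- extend A' to a full matrix in the box
    set A : Matrix (Fin p) (Fin q) ℝ := Matrix.of fun i j =>
      if h : (∃ x, I x = i) ∧ (∃ y, J y = j) then
        A' (Classical.choose h.1) (Classical.choose h.2)
      else m i j with hA
    have hsub : A.submatrix I J = A' := by
      ext x y
      have h : (∃ x', I x' = I x) ∧ (∃ y', J y' = J y) := ⟨⟨x, rfl⟩, ⟨y, rfl⟩⟩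
      have : A (I x) (J y) = A' (Classical.choose h.1) (Classical.choose h.2) := by
        simp only [hA, Matrix.of_apply, dif_pos h]
      rw [Matrix.submatrix_apply, this]
      congr 1
      · exact hI (Classical.choose_spec h.1)
      · exact hJ (Classical.choose_spec h.2)
    have hboxA : ∀ i j, A i j ∈ Set.Icc (m i j) (M i j) := by
      intro i j
      by_cases h : (∃ x, I x = i) ∧ (∃ y, J y = j)
      · have : A i j = A' (Classical.choose h.1) (Classical.choose h.2) := by
          simp only [hA, Matrix.of_apply, dif_pos h]
        rw [this]
        have hbb := hbox' (Classical.choose h.1) (Classical.choose h.2)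
        rw [Matrix.submatrix_apply, Matrix.submatrix_apply,
          Classical.choose_spec h.1, Classical.choose_spec h.2] at hbb
        exact hbb
      · have : A i j = m i j := by simp only [hA, Matrix.of_apply, dif_neg h]
        rw [this]
        exact ⟨le_refl _, hle i j⟩
    have hrank : s ≤ A.rank := by
      refine rank_ge_of_submatrix_det_ne_zero A I J ?_
      rw [hsub]
      exact hdet'
    exact hrank.trans (le_csSup hSlbdd ⟨A, hboxA, rfl⟩)
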